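/- Assume Phi satisfies the Restricted Isometry Condition with parameters (4n, eps), 0 < eps < 1 (in particular for 2n-sparse vectors). Let v be any vector in R^d, v_n a best n-term approximation of v and v_{2n} a best 2n-term approximation of v with supp(v_n) ⊆ supp(v_{2n}). Then ||Phi(v - v_{2n})||_2 <= 1.5*(1+eps)*||v - v_n||_1 / sqrt(n). -/
import Mathlib


open scoped BigOperators

noncomputable def l2 {d : ℕ} (v : Fin d → ℝ) : ℝ := Real.sqrt (∑ i, (v i)^2)

noncomputable def l1 {d : ℕ} (v : Fin d → ℝ) : ℝ := ∑ i, |v i|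

noncomputable def linf {d : ℕ} (v : Fin d → ℝ) : ℝ := ⨆ i, |v i|

noncomputable def restrict {d : ℕ} (v : Fin d → ℝ) (T : Finset (Fin d)) : Fin d → ℝ :=
  fun i => if i ∈ T then v i else 0

open Classical in
noncomputable def spt {d : ℕ} (v : Fin d → ℝ) : Finset (Fin d) :=
  Finset.univ.filter (fun i => v i ≠ 0)

def RIC {N d : ℕ} (Φ : Matrix (Fin N) (Fin d) ℝ) (m : ℕ) (ε : ℝ) : Prop :=
  ∀ z : Fin d → ℝ, (spt z).card ≤ m →
    (1 - ε) * l2 z ≤ l2 (Φ.mulVec z) ∧ l2 (Φ.mulVec z) ≤ (1 + ε) * l2 z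

lemma l1_nonneg {d : ℕ} (v : Fin d → ℝ) : 0 ≤ l1 v :=
  Finset.sum_nonneg fun _ _ => abs_nonneg _

lemma l2_eq_norm {d : ℕ} (v : Fin d → ℝ) :
    l2 v = ‖(WithLp.equiv 2 (Fin d → ℝ)).symm v‖ := by
  rw [EuclideanSpace.norm_eq]
  simp [l2, Real.norm_eq_abs, sq_abs]

lemma l2_nonneg {d : ℕ} (v : Fin d → ℝ) : 0 ≤ l2 v := Real.sqrt_nonneg _

lemma l2_add_le {d : ℕ} (v w : Fin d → ℝ) : l2 (v + w) ≤ l2 v + l2 w := by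
  rw [l2_eq_norm, l2_eq_norm, l2_eq_norm]
  exact norm_add_le ((WithLp.equiv 2 (Fin d → ℝ)).symm v) ((WithLp.equiv 2 (Fin d → ℝ)).symm w)

lemma mem_spt {d : ℕ} {v : Fin d → ℝ} {i : Fin d} : i ∈ spt v ↔ v i ≠ 0 := by
  classical simp [spt]

lemma l2_le_sqrt_card {d : ℕ} (w : Fin d → ℝ) (c : ℝ) (hc : 0 ≤ c)
    (h : ∀ i, |w i| ≤ c) (m : ℕ) (hm : (spt w).card ≤ m) :
    l2 w ≤ Real.sqrt m * c := by
  have h1 : ∑ i, (w i)^2 ≤ (m : ℝ) * c^2 := by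
    classical
    have : ∑ i, (w i)^2 = ∑ i ∈ spt w, (w i)^2 := by
      refine (Finset.sum_subset (Finset.subset_univ _) ?_).symm
      intro i _ hi
      have h0 : w i = 0 := by
        by_contra hne
        exact hi (mem_spt.mpr hne)
      simp [h0]
    rw [this]
    calc ∑ i ∈ spt w, (w i)^2 ≤ ∑ _i ∈ spt w, c^2 := by
          apply Finset.sum_le_sum
          intro i _
          have := h i
          nlinarith [abs_nonneg (w i), sq_abs (w i)]
      _ = (spt w).card * c^2 := by rw [Finset.sum_const, nsmul_eq_mul]
      _ ≤ (m : ℝ) * c^2 := by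
          apply mul_le_mul_of_nonneg_right _ (sq_nonneg c)
          exact_mod_cast hm
  calc l2 w ≤ Real.sqrt ((m : ℝ) * c^2) := Real.sqrt_le_sqrt h1
    _ = Real.sqrt m * c := by
        rw [Real.sqrt_mul (Nat.cast_nonneg m), Real.sqrt_sq hc]

lemma topn {d : ℕ} (f : Fin d → ℝ) :
    ∀ (n : ℕ) (A : Finset (Fin d)), n ≤ A.card →
      ∃ B, B ⊆ A ∧ B.card = n ∧ ∀ i ∈ B, ∀ j ∈ A, j ∉ B → f j ≤ f i := by
  intro n
  induction n with
  | zero => intro A _; exact ⟨∅, Finset.empty_subset A, rfl, by simp⟩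
  | succ n ih =>
    intro A hA
    have hne : A.Nonempty := Finset.card_pos.mp (by omega)
    obtain ⟨a, ha, hmax⟩ := Finset.exists_max_image A f hne
    obtain ⟨B, hBsub, hBcard, hBdom⟩ := ih (A.erase a)
      (by rw [Finset.card_erase_of_mem ha]; omega)
    have haB : a ∉ B := fun h => (Finset.mem_erase.mp (hBsub h)).1 rfl
    refine ⟨insert a B, ?_, ?_, ?_⟩
    · intro x hx
      rcases Finset.mem_insert.mp hx with h | h
      · exact h ▸ ha
      · exact (Finset.mem_erase.mp (hBsub h)).2
    · rw [Finset.card_insert_of_notMem haB, hBcard]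
    · intro i hi j hj hjB
      rcases Finset.mem_insert.mp hi with h | h
      · exact h ▸ hmax j hj
      · exact hBdom i h j (Finset.mem_erase.mpr ⟨fun he => hjB (he ▸ Finset.mem_insert_self a B), hj⟩)
          (fun hb => hjB (Finset.mem_insert_of_mem hb))

lemma l1_split {d : ℕ} (w : Fin d → ℝ) (B : Finset (Fin d)) :
    l1 (restrict w B) + l1 (w - restrict w B) = l1 w := by
  unfold l1
  rw [← Finset.sum_add_distrib]
  apply Finset.sum_congr rfl
  intro i _
  by_cases h : i ∈ B <;> simp [restrict, h]

lemma key {N d : ℕ} (Φ : Matrix (Fin N) (Fin d) ℝ) (n : ℕ) (hn : 0 < n) (ε : ℝ)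
    (hε : 0 ≤ ε) (hRIC : RIC Φ (4 * n) ε) :
    ∀ (k : ℕ) (w : Fin d → ℝ), (spt w).card ≤ k → ∀ c : ℝ, 0 ≤ c → (∀ j, |w j| ≤ c) →
      l2 (Φ.mulVec w) ≤ (1 + ε) * (Real.sqrt n * c + l1 w / Real.sqrt n) := by
  have hsn : (0:ℝ) < Real.sqrt n := Real.sqrt_pos.mpr (by exact_mod_cast hn)
  have h1ε : (0:ℝ) ≤ 1 + ε := by linarith
  intro k
  induction k with
  | zero =>
    intro w hw c hc hwc
    have hcard : (spt w).card ≤ n := by omega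
    calc l2 (Φ.mulVec w) ≤ (1 + ε) * l2 w := (hRIC w (by omega)).2
      _ ≤ (1 + ε) * (Real.sqrt n * c) := by
          apply mul_le_mul_of_nonneg_left _ h1ε
          exact l2_le_sqrt_card w c hc hwc n hcard
      _ ≤ (1 + ε) * (Real.sqrt n * c + l1 w / Real.sqrt n) := by
          apply mul_le_mul_of_nonneg_left _ h1ε
          have h0 : 0 ≤ l1 w / Real.sqrt n := div_nonneg (l1_nonneg w) hsn.le
          linarith
  | succ k ih =>
    intro w hw c hc hwc
    by_cases hbase : (spt w).card ≤ n
    · calc l2 (Φ.mulVec w) ≤ (1 + ε) * l2 w := (hRIC w (by omega)).2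
        _ ≤ (1 + ε) * (Real.sqrt n * c) := by
            apply mul_le_mul_of_nonneg_left _ h1ε
            exact l2_le_sqrt_card w c hc hwc n hbase
        _ ≤ (1 + ε) * (Real.sqrt n * c + l1 w / Real.sqrt n) := by
            apply mul_le_mul_of_nonneg_left _ h1ε
            have h0 : 0 ≤ l1 w / Real.sqrt n := div_nonneg (l1_nonneg w) hsn.le
            linarith
    · push_neg at hbase
      obtain ⟨B, hBsub, hBcard, hBdom⟩ := topn (fun i => |w i|) n (spt w) hbase.le
      have hBne : B.Nonempty := Finset.card_pos.mp (by omega)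
      obtain ⟨i₀, hi₀B, hi₀min⟩ := Finset.exists_min_image B (fun i => |w i|) hBne
      set c' := |w i₀| with hc'
      set w' := w - restrict w B with hw'
      have hsptw' : spt w' ⊆ spt w \ B := by
        intro i hi
        have hiw : w' i ≠ 0 := mem_spt.mp hi
        by_cases hiB : i ∈ B
        · exfalso; apply hiw; simp [hw', restrict, hiB]
        · refine Finset.mem_sdiff.mpr ⟨?_, hiB⟩
          apply mem_spt.mpr
          intro h0
          apply hiw
          simp [hw', restrict, hiB, h0]
      have hcard' : (spt w').card ≤ k := by
        have h1 : (spt w').card ≤ (spt w \ B).card := Finset.card_le_card hsptw'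
        have h2 : (spt w \ B).card = (spt w).card - n := by
          rw [Finset.card_sdiff_of_subset hBsub, hBcard]
        omega
      have hw'c : ∀ j, |w' j| ≤ c' := by
        intro j
        by_cases hjB : j ∈ B
        · have h0 : w' j = 0 := by simp [hw', restrict, hjB]
          rw [h0, abs_zero, hc']
          exact abs_nonneg _
        · have hval : w' j = w j := by simp [hw', restrict, hjB]
          rw [hval]
          by_cases hjs : j ∈ spt w
          · exact hBdom i₀ hi₀B j hjs hjB
          · have : w j = 0 := by
              by_contra hne; exact hjs (mem_spt.mpr hne)
            rw [this, abs_zero, hc']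
            exact abs_nonneg _
      have hnc' : (n : ℝ) * c' ≤ l1 (restrict w B) := by
        have heq : l1 (restrict w B) = ∑ i ∈ B, |w i| := by
          unfold l1
          rw [← Finset.sum_subset (Finset.subset_univ B)]
          · exact Finset.sum_congr rfl (fun i hi => by simp [restrict, hi])
          · intro i _ hi; simp [restrict, hi]
        rw [heq]
        calc (n : ℝ) * c' = ∑ _i ∈ B, c' := by rw [Finset.sum_const, nsmul_eq_mul, hBcard]
          _ ≤ ∑ i ∈ B, |w i| := Finset.sum_le_sum (fun i hi => hi₀min i hi)
      have hsptB : (spt (restrict w B)).card ≤ 4 * n := by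
        have hsub : spt (restrict w B) ⊆ B := by
          intro i hi
          by_contra hiB
          exact mem_spt.mp hi (by simp [restrict, hiB])
        calc (spt (restrict w B)).card ≤ B.card := Finset.card_le_card hsub
          _ = n := hBcard
          _ ≤ 4 * n := by omega
      have hΦB : l2 (Φ.mulVec (restrict w B)) ≤ (1 + ε) * (Real.sqrt n * c) := by
        calc l2 (Φ.mulVec (restrict w B)) ≤ (1 + ε) * l2 (restrict w B) := (hRIC _ hsptB).2
          _ ≤ (1 + ε) * (Real.sqrt n * c) := by
              apply mul_le_mul_of_nonneg_left _ h1ε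
              apply l2_le_sqrt_card _ c hc _ n (le_trans (Finset.card_le_card (by
                intro i hi
                by_contra hiB
                exact mem_spt.mp hi (by simp [restrict, hiB]))) hBcard.le)
              intro i
              by_cases hiB : i ∈ B <;> simp [restrict, hiB, hwc i, hc]
      have hΦw' : l2 (Φ.mulVec w') ≤ (1 + ε) * (Real.sqrt n * c' + l1 w' / Real.sqrt n) :=
        ih w' hcard' c' (abs_nonneg _) hw'c
      have hdecomp : w = restrict w B + w' := by
        funext i; simp [hw']
      have hsqc' : Real.sqrt n * c' ≤ l1 (restrict w B) / Real.sqrt n := by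
        rw [le_div_iff₀ hsn]
        calc Real.sqrt n * c' * Real.sqrt n = (Real.sqrt n * Real.sqrt n) * c' := by ring
          _ = (n : ℝ) * c' := by rw [Real.mul_self_sqrt (Nat.cast_nonneg n)]
          _ ≤ l1 (restrict w B) := hnc'
      have hsplit := l1_split w B
      calc l2 (Φ.mulVec w) = l2 (Φ.mulVec (restrict w B) + Φ.mulVec w') := by
            conv_lhs => rw [hdecomp]
            rw [Matrix.mulVec_add]
        _ ≤ l2 (Φ.mulVec (restrict w B)) + l2 (Φ.mulVec w') := l2_add_le _ _
        _ ≤ (1 + ε) * (Real.sqrt n * c) + (1 + ε) * (Real.sqrt n * c' + l1 w' / Real.sqrt n) := by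
            linarith
        _ ≤ (1 + ε) * (Real.sqrt n * c + l1 w / Real.sqrt n) := by
            have h2 : Real.sqrt n * c' + l1 w' / Real.sqrt n ≤ l1 w / Real.sqrt n := by
              rw [← hsplit, add_div]
              have heq : l1 (w - restrict w B) = l1 w' := by rw [hw']
              linarith [hsqc']
            nlinarith [h1ε]

/-- Bound on the measurements of the tail: ‖Φ(v - v_{2n})‖₂ ≤ 1.5(1+ε)‖v - v_n‖₁/√n. -/
theorem stmt16 {N d : ℕ} (Φ : Matrix (Fin N) (Fin d) ℝ) (n : ℕ) (hn : 0 < n) (ε : ℝ)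
    (hε : 0 < ε) (hε1 : ε < 1) (hRIC : RIC Φ (4 * n) ε)
    (v : Fin d → ℝ)
    (S T : Finset (Fin d)) (hS : S.card = n) (hT : T.card = 2 * n) (hST : S ⊆ T)
    (hSbig : ∀ i ∈ S, ∀ j ∉ S, |v j| ≤ |v i|)
    (hTbig : ∀ i ∈ T, ∀ j ∉ T, |v j| ≤ |v i|) :
    l2 (Φ.mulVec (v - restrict v T)) ≤ 1.5 * (1 + ε) * l1 (v - restrict v S) / Real.sqrt n := by
  classical
  have hsn : (0:ℝ) < Real.sqrt n := Real.sqrt_pos.mpr (by exact_mod_cast hn)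
  set w := v - restrict v T with hw
  have hTSne : (T \ S).Nonempty := by
    apply Finset.card_pos.mp
    rw [Finset.card_sdiff_of_subset hST, hS, hT]
    omega
  obtain ⟨i₀, hi₀, hmin⟩ := Finset.exists_min_image (T \ S) (fun i => |v i|) hTSne
  set c := |v i₀| with hc
  have hi₀T : i₀ ∈ T := (Finset.mem_sdiff.mp hi₀).1
  have hwc : ∀ j, |w j| ≤ c := by
    intro j
    by_cases hjT : j ∈ T
    · have h0 : w j = 0 := by simp [hw, restrict, hjT]
      rw [h0, abs_zero, hc]
      exact abs_nonneg _
    · have h1 : w j = v j := by simp [hw, restrict, hjT]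
      rw [h1, hc]
      exact hTbig i₀ hi₀T j hjT
  have hkey := key Φ n hn ε hε.le hRIC (spt w).card w le_rfl c (abs_nonneg _) hwc
  set A : ℝ := ∑ i ∈ T \ S, |v i| with hA
  have hncA : (n : ℝ) * c ≤ A := by
    rw [hA]
    have h2 : 2 * n - n = n := by omega
    calc (n : ℝ) * c = ∑ _i ∈ T \ S, c := by
          rw [Finset.sum_const, nsmul_eq_mul, Finset.card_sdiff_of_subset hST, hS, hT, h2]
      _ ≤ ∑ i ∈ T \ S, |v i| := Finset.sum_le_sum (fun i hi => hmin i hi)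
  have hl1eq : l1 (v - restrict v S) = A + l1 w := by
    rw [hA]
    unfold l1
    have hsplit : ∀ j, |(v - restrict v S) j| =
        (if j ∈ T \ S then |v j| else 0) + |w j| := by
      intro j
      by_cases hjS : j ∈ S
      · have hjT : j ∈ T := hST hjS
        simp [hw, restrict, hjS, hjT, Finset.mem_sdiff]
      · by_cases hjT : j ∈ T
        · simp [hw, restrict, hjS, hjT, Finset.mem_sdiff]
        · simp [hw, restrict, hjS, hjT, Finset.mem_sdiff]
    calc ∑ j, |(v - restrict v S) j|
        = ∑ j, ((if j ∈ T \ S then |v j| else 0) + |w j|) := by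
          exact Finset.sum_congr rfl (fun j _ => hsplit j)
      _ = (∑ j, if j ∈ T \ S then |v j| else 0) + ∑ j, |w j| := Finset.sum_add_distrib
      _ = (∑ i ∈ T \ S, |v i|) + ∑ j, |w j| := by
          congr 1
          rw [Finset.sum_ite_mem, Finset.univ_inter]
  have hstep : Real.sqrt n * c ≤ A / Real.sqrt n := by
    rw [le_div_iff₀ hsn]
    calc Real.sqrt n * c * Real.sqrt n = (Real.sqrt n * Real.sqrt n) * c := by ring
      _ = (n : ℝ) * c := by rw [Real.mul_self_sqrt (Nat.cast_nonneg n)]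
      _ ≤ A := hncA
  have h1ε : (0:ℝ) ≤ 1 + ε := by linarith
  have hl1w : 0 ≤ l1 w := l1_nonneg w
  have hAnn : 0 ≤ A := Finset.sum_nonneg (fun i _ => abs_nonneg _)
  calc l2 (Φ.mulVec w) ≤ (1 + ε) * (Real.sqrt n * c + l1 w / Real.sqrt n) := hkey
    _ ≤ (1 + ε) * ((A + l1 w) / Real.sqrt n) := by
        apply mul_le_mul_of_nonneg_left _ h1ε
        rw [add_div]
        linarith
    _ = (1 + ε) * l1 (v - restrict v S) / Real.sqrt n := by
        rw [hl1eq]; ring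
    _ ≤ 1.5 * (1 + ε) * l1 (v - restrict v S) / Real.sqrt n := by
        apply div_le_div_of_nonneg_right _ hsn.le
        have : 0 ≤ l1 (v - restrict v S) := l1_nonneg _
        nlinarith
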